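/- Every infinite hyperbolic group contains an element of infinite order. -/

import Mathlib

/-- The element of the group `G` represented by the word `w` over the
generating set, where `σ` maps generators to group elements. -/
def evalW {α : Type*} {G : Type*} [Group G] (σ : α → G) (w : List α) : G :=
  (w.map σ).prod

/-- The word length of a group element: the smallest length of a word over the
generators representing it. -/
noncomputable def wlen {α : Type*} {G : Type*} [Group G] (σ : α → G) (g : G) : ℕ :=
  sInf {n | ∃ w : List α, evalW σ w = g ∧ w.length = n}

/-- The word metric on the Cayley graph of `G` with respect to `σ`. -/
noncomputable def gdist {α : Type*} {G : Type*} [Group G] (σ : α → G) (g h : G) : ℕ :=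
  wlen σ (g⁻¹ * h)

/-- `σ` lists a generating set of `G`: every element is represented by a word. -/
def Generates {α : Type*} {G : Type*} [Group G] (σ : α → G) : Prop :=
  ∀ g : G, ∃ w : List α, evalW σ w = g

/-- The generating set is symmetric: it is closed under inversion. -/
def SymmetricGens {α : Type*} {G : Type*} [Group G] (σ : α → G) : Prop :=
  ∀ a : α, ∃ b : α, σ b = (σ a)⁻¹

/-- A word is geodesic if it labels a geodesic path in the Cayley graph,
i.e. its length equals the word length of the element it represents. -/
def IsGeodesicWord {α : Type*} {G : Type*} [Group G] (σ : α → G) (w : List α) : Prop :=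
  wlen σ (evalW σ w) = w.length

/-- The Cayley graph of `G` (w.r.t. `σ`) is `δ`-hyperbolic: every geodesic
triangle is `δ`-slim.  A triangle is encoded by geodesic words `x, y, z` with
`eval x · eval y · eval z = 1`; the side labelled `x` starts at `1`, the side
labelled `y` starts at `eval x`, the side labelled `z` starts at `eval x · eval y`.
Slimness: every point on the first side is within distance `δ` of the union of
the other two sides (by symmetry of the quantification this applies to each side). -/
def DeltaHyperbolic {α : Type*} {G : Type*} [Group G] (σ : α → G) (δ : ℕ) : Prop :=
  ∀ x y z : List α, IsGeodesicWord σ x → IsGeodesicWord σ y → IsGeodesicWord σ z →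
    evalW σ x * evalW σ y * evalW σ z = 1 →
    ∀ i ≤ x.length, ∃ j : ℕ,
      (j ≤ y.length ∧
        gdist σ (evalW σ (x.take i)) (evalW σ x * evalW σ (y.take j)) ≤ δ) ∨
      (j ≤ z.length ∧
        gdist σ (evalW σ (x.take i)) (evalW σ x * evalW σ y * evalW σ (z.take j)) ≤ δ)

section Helpers

variable {α : Type*} {G : Type*} [Group G]

lemma evalW_nil (σ : α → G) : evalW σ ([] : List α) = 1 := rfl

lemma evalW_cons (σ : α → G) (a : α) (t : List α) :
    evalW σ (a :: t) = σ a * evalW σ t := by simp [evalW]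

lemma evalW_append (σ : α → G) (u v : List α) :
    evalW σ (u ++ v) = evalW σ u * evalW σ v := by simp [evalW]

lemma evalW_take_mul_drop (σ : α → G) (w : List α) (i : ℕ) :
    evalW σ (w.take i) * evalW σ (w.drop i) = evalW σ w := by
  rw [← evalW_append, List.take_append_drop]

lemma evalW_drop_eq (σ : α → G) (w : List α) (i : ℕ) :
    evalW σ (w.drop i) = (evalW σ (w.take i))⁻¹ * evalW σ w := by
  rw [← evalW_take_mul_drop σ w i]; group

lemma wlen_le_length (σ : α → G) (w : List α) : wlen σ (evalW σ w) ≤ w.length :=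
  Nat.sInf_le ⟨w, rfl, rfl⟩

lemma exists_min_word (σ : α → G) {g : G} (h : ∃ w : List α, evalW σ w = g) :
    ∃ w : List α, evalW σ w = g ∧ w.length = wlen σ g := by
  have hne : {n | ∃ w : List α, evalW σ w = g ∧ w.length = n}.Nonempty := by
    obtain ⟨w, hw⟩ := h; exact ⟨w.length, w, hw, rfl⟩
  obtain ⟨w, hw, hl⟩ := Nat.sInf_mem hne
  exact ⟨w, hw, hl⟩

lemma wlen_one (σ : α → G) : wlen σ (1 : G) = 0 :=
  Nat.le_zero.mp (wlen_le_length σ ([] : List α))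

lemma wlen_mul_le (σ : α → G) (hgen : Generates σ) (g h : G) :
    wlen σ (g * h) ≤ wlen σ g + wlen σ h := by
  obtain ⟨u, hu, hul⟩ := exists_min_word σ (hgen g)
  obtain ⟨v, hv, hvl⟩ := exists_min_word σ (hgen h)
  have : evalW σ (u ++ v) = g * h := by rw [evalW_append, hu, hv]
  calc wlen σ (g * h) ≤ (u ++ v).length := this ▸ wlen_le_length σ (u ++ v)
    _ = wlen σ g + wlen σ h := by simp [hul, hvl]

lemma exists_inv_word (σ : α → G) (hsym : SymmetricGens σ) (w : List α) :
    ∃ w' : List α, evalW σ w' = (evalW σ w)⁻¹ ∧ w'.length = w.length := by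
  induction w with
  | nil => exact ⟨[], by simp [evalW], rfl⟩
  | cons a t ih =>
    obtain ⟨t', ht', hlen⟩ := ih
    obtain ⟨b, hb⟩ := hsym a
    refine ⟨t' ++ [b], ?_, by simp [hlen]⟩
    rw [evalW_append, ht', evalW_cons]
    simp [evalW, hb, mul_inv_rev]

lemma wlen_inv (σ : α → G) (hgen : Generates σ) (hsym : SymmetricGens σ) (g : G) :
    wlen σ g⁻¹ = wlen σ g := by
  have key : ∀ x : G, wlen σ x⁻¹ ≤ wlen σ x := by
    intro x
    obtain ⟨w, hw, hwl⟩ := exists_min_word σ (hgen x)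
    obtain ⟨w', hw', hw'l⟩ := exists_inv_word σ hsym w
    have : evalW σ w' = x⁻¹ := by rw [hw', hw]
    calc wlen σ x⁻¹ ≤ w'.length := this ▸ wlen_le_length σ w'
      _ = wlen σ x := by rw [hw'l, hwl]
  exact le_antisymm (key g) (by simpa using key g⁻¹)

lemma geodesic_take (σ : α → G) (hgen : Generates σ) {w : List α}
    (hw : IsGeodesicWord σ w) {i : ℕ} (hi : i ≤ w.length) :
    wlen σ (evalW σ (w.take i)) = i ∧ wlen σ (evalW σ (w.drop i)) = w.length - i := by
  have h1 : wlen σ (evalW σ (w.take i)) ≤ i := by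
    have := wlen_le_length σ (w.take i)
    simpa [List.length_take, Nat.min_eq_left hi] using this
  have h2 : wlen σ (evalW σ (w.drop i)) ≤ w.length - i := by
    have := wlen_le_length σ (w.drop i)
    simpa [List.length_drop] using this
  have h3 : w.length ≤ wlen σ (evalW σ (w.take i)) + wlen σ (evalW σ (w.drop i)) := by
    have := wlen_mul_le σ hgen (evalW σ (w.take i)) (evalW σ (w.drop i))
    rw [evalW_take_mul_drop] at this
    rw [← hw]; exact this
  omega

end Helpers

section Ged

variable {α : Type*} {G : Type*} [Group G]

/-- ℤ-valued word metric. -/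
noncomputable def ged (σ : α → G) (a b : G) : ℤ := (wlen σ (a⁻¹ * b) : ℤ)

lemma ged_eq_gdist (σ : α → G) (a b : G) : ged σ a b = (gdist σ a b : ℤ) := rfl

lemma ged_nonneg (σ : α → G) (a b : G) : 0 ≤ ged σ a b := Int.natCast_nonneg _

lemma ged_one_left (σ : α → G) (a : G) : ged σ 1 a = (wlen σ a : ℤ) := by
  simp [ged]

lemma ged_one_right (σ : α → G) (a : G) : ged σ a 1 = (wlen σ a⁻¹ : ℤ) := by
  simp [ged]

lemma ged_comm (σ : α → G) (hgen : Generates σ) (hsym : SymmetricGens σ) (a b : G) :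
    ged σ a b = ged σ b a := by
  unfold ged
  rw [show b⁻¹ * a = (a⁻¹ * b)⁻¹ by group, wlen_inv σ hgen hsym]

lemma ged_triangle (σ : α → G) (hgen : Generates σ) (a b c : G) :
    ged σ a c ≤ ged σ a b + ged σ b c := by
  unfold ged
  have := wlen_mul_le σ hgen (a⁻¹ * b) (b⁻¹ * c)
  rw [show a⁻¹ * b * (b⁻¹ * c) = a⁻¹ * c by group] at this
  exact_mod_cast this

lemma ged_mul_left (σ : α → G) (g a b : G) : ged σ (g * a) (g * b) = ged σ a b := by
  unfold ged
  rw [show (g * a)⁻¹ * (g * b) = a⁻¹ * b by group]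

/-- Doubled Gromov product (as a difference expression). -/
noncomputable def Tpr (σ : α → G) (p a b : G) : ℤ :=
  ged σ p a + ged σ p b - ged σ a b

lemma Tpr_mul_left (σ : α → G) (g p a b : G) :
    Tpr σ (g * p) (g * a) (g * b) = Tpr σ p a b := by
  unfold Tpr; rw [ged_mul_left, ged_mul_left, ged_mul_left]

lemma Tpr_comm (σ : α → G) (hgen : Generates σ) (hsym : SymmetricGens σ) (p a b : G) :
    Tpr σ p a b = Tpr σ p b a := by
  unfold Tpr; rw [ged_comm σ hgen hsym a b]; ring

end Ged

section FourPoint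

variable {α : Type*} {G : Type*} [Group G]

lemma side_facts (σ : α → G) (hgen : Generates σ) {w : List α}
    (hw : IsGeodesicWord σ w) (β : G) {j : ℕ} (hj : j ≤ w.length) :
    ged σ β (β * evalW σ (w.take j)) = j ∧
    ged σ (β * evalW σ (w.take j)) (β * evalW σ w) = (w.length : ℤ) - j := by
  constructor
  · unfold ged
    rw [show β⁻¹ * (β * evalW σ (w.take j)) = evalW σ (w.take j) by group,
      (geodesic_take σ hgen hw hj).1]
  · unfold ged
    rw [show (β * evalW σ (w.take j))⁻¹ * (β * evalW σ w)
        = (evalW σ (w.take j))⁻¹ * evalW σ w by group,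
      ← evalW_drop_eq, (geodesic_take σ hgen hw hj).2]
    push_cast [Nat.cast_sub hj]
    ring

lemma ged_step (σ : α → G) {w : List α} (i : ℕ) :
    ged σ (evalW σ (w.take i)) (evalW σ (w.take (i+1))) ≤ 1 := by
  have hsplit : w.take (i+1) = w.take i ++ (w.drop i).take 1 := by
    rw [← List.take_add]
  unfold ged
  rw [hsplit, evalW_append,
    show (evalW σ (w.take i))⁻¹ * (evalW σ (w.take i) * evalW σ ((w.drop i).take 1))
      = evalW σ ((w.drop i).take 1) by group]
  have h1 : wlen σ (evalW σ ((w.drop i).take 1)) ≤ ((w.drop i).take 1).length :=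
    wlen_le_length σ _
  have h2 : ((w.drop i).take 1).length ≤ 1 := by
    rw [List.length_take]; exact min_le_left _ _
  exact_mod_cast le_trans h1 h2

lemma fourpoint_base (σ : α → G) (hgen : Generates σ) (hsym : SymmetricGens σ)
    {δ : ℕ} (hhyp : DeltaHyperbolic σ δ) (p y z : G) :
    min (Tpr σ p 1 y) (Tpr σ p y z) - (6 * (δ : ℤ) + 2) ≤ Tpr σ p 1 z := by
  classical
  obtain ⟨v, hv, hvl⟩ := exists_min_word σ (hgen z)
  obtain ⟨s₂, hs₂, hs₂l⟩ := exists_min_word σ (hgen (z⁻¹ * y))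
  obtain ⟨s₃, hs₃, hs₃l⟩ := exists_min_word σ (hgen y⁻¹)
  obtain ⟨b, hb, hbl⟩ := exists_min_word σ (hgen (z⁻¹ * p))
  obtain ⟨a, ha, hal⟩ := exists_min_word σ (hgen p⁻¹)
  have gv : IsGeodesicWord σ v := by rw [IsGeodesicWord, hv, hvl]
  have gs₂ : IsGeodesicWord σ s₂ := by rw [IsGeodesicWord, hs₂, hs₂l]
  have gs₃ : IsGeodesicWord σ s₃ := by rw [IsGeodesicWord, hs₃, hs₃l]
  have gb : IsGeodesicWord σ b := by rw [IsGeodesicWord, hb, hbl]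
  have ga : IsGeodesicWord σ a := by rw [IsGeodesicWord, ha, hal]
  have hvb : evalW σ v * evalW σ b = p := by rw [hv, hb]; group
  have hvs₂ : evalW σ v * evalW σ s₂ = y := by rw [hv, hs₂]; group
  -- basic length identities
  have hL : (v.length : ℤ) = ged σ 1 z := by rw [ged_one_left, hvl]
  have hal' : (a.length : ℤ) = ged σ p 1 := by rw [ged_one_right, hal]
  have hbl' : (b.length : ℤ) = ged σ z p := by rw [hbl]; rfl
  have hs₂l' : (s₂.length : ℤ) = ged σ z y := by rw [hs₂l]; rfl
  have hs₃l' : (s₃.length : ℤ) = ged σ y 1 := by rw [ged_one_right, hs₃l]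
  -- the two triangles
  have T2 := hhyp v b a gv gb ga (by rw [hv, hb, ha]; group)
  have T1 := hhyp v s₂ s₃ gv gs₂ gs₃ (by rw [hv, hs₂, hs₃]; group)
  set Q : ℕ → Prop := fun i => ∃ j, j ≤ a.length ∧
    gdist σ (evalW σ (v.take i)) (evalW σ v * evalW σ b * evalW σ (a.take j)) ≤ δ with hQdef
  have hQ0 : Q 0 := by
    refine ⟨a.length, le_rfl, ?_⟩
    rw [List.take_length, List.take_zero, evalW_nil, hv, hb, ha,
      show z * (z⁻¹ * p) * p⁻¹ = 1 by group]
    simp [gdist, wlen_one]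
  set istar : ℕ := Nat.findGreatest Q v.length with histardef
  have histar : istar ≤ v.length := Nat.findGreatest_le v.length
  have hQstar : Q istar := Nat.findGreatest_spec (Nat.zero_le _) hQ0
  -- distances from p to the point P istar on the side [1,z]
  obtain ⟨j, hj, hdist⟩ := hQstar
  have hA := side_facts σ hgen ga p hj
  rw [ha, mul_inv_cancel] at hA
  have hdist' : ged σ (evalW σ (v.take istar)) (p * evalW σ (a.take j)) ≤ (δ : ℤ) := by
    rw [ged_eq_gdist]
    rw [hvb] at hdist
    exact_mod_cast hdist
  have hPv := side_facts σ hgen gv 1 histar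
  simp only [one_mul] at hPv
  rw [hv] at hPv
  -- (6) : ged p (P istar) ≤ ged p 1 - istar + 2δ
  have h6 : ged σ p (evalW σ (v.take istar)) ≤ ged σ p 1 - istar + 2 * δ := by
    have t1 : ged σ 1 (evalW σ (v.take istar)) ≤ ged σ 1 (p * evalW σ (a.take j))
        + ged σ (p * evalW σ (a.take j)) (evalW σ (v.take istar)) := ged_triangle σ hgen _ _ _
    have t2 : ged σ (p * evalW σ (a.take j)) (evalW σ (v.take istar))
        = ged σ (evalW σ (v.take istar)) (p * evalW σ (a.take j)) := ged_comm σ hgen hsym _ _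
    have t3 : ged σ 1 (p * evalW σ (a.take j)) = ged σ (p * evalW σ (a.take j)) 1 :=
      ged_comm σ hgen hsym _ _
    have t4 : ged σ p (evalW σ (v.take istar)) ≤ ged σ p (p * evalW σ (a.take j))
        + ged σ (p * evalW σ (a.take j)) (evalW σ (v.take istar)) := ged_triangle σ hgen _ _ _
    -- ged 1 (P) = istar ; ged (A) 1 = |a| - j ; ged p A = j
    have e1 : ged σ 1 (evalW σ (v.take istar)) = (istar : ℤ) := hPv.1
    linarith [hA.1, hA.2, hal', t1, t2, t3, t4, hdist']
  -- key1 : 2 * ged p (P istar) ≤ Tpr p 1 z + 4δ + 2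
  have key1 : 2 * ged σ p (evalW σ (v.take istar)) ≤ Tpr σ p 1 z + 4 * δ + 2 := by
    rcases eq_or_lt_of_le histar with heq | hlt
    · -- istar = v.length, P istar = z
      have hPz : evalW σ (v.take istar) = z := by rw [heq, List.take_length, hv]
      have : ged σ p z ≤ ged σ p 1 - istar + 2 * δ := by rw [← hPz]; exact h6
      have hnn : (0:ℤ) ≤ ged σ p z := ged_nonneg σ _ _
      unfold Tpr
      rw [hPz]
      have : (v.length : ℤ) = istar := by exact_mod_cast heq.symm
      linarith [hL, ‹ged σ p z ≤ ged σ p 1 - istar + 2 * δ›]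
    · -- istar < v.length : use maximality and the second triangle at istar+1
      have hnotQ : ¬ Q (istar + 1) :=
        Nat.findGreatest_is_greatest (Nat.lt_succ_of_le le_rfl) hlt
      obtain ⟨j', hcase⟩ := T2 (istar + 1) hlt
      rcases hcase with ⟨hj', hd'⟩ | ⟨hj', hd'⟩
      swap
      · exact absurd ⟨j', hj', hd'⟩ hnotQ
      -- close to point B = z * eval (b.take j') on side [z, p]
      have hB := side_facts σ hgen gb z hj'
      rw [hb, show z * (z⁻¹ * p) = p by group] at hB
      have hd'' : ged σ (evalW σ (v.take (istar+1))) (z * evalW σ (b.take j')) ≤ (δ : ℤ) := by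
        rw [ged_eq_gdist]
        rw [hv] at hd'
        exact_mod_cast hd'
      have hPv1 := side_facts σ hgen gv 1 (Nat.succ_le_of_lt hlt)
      simp only [one_mul] at hPv1
      rw [hv] at hPv1
      -- j' ≥ (L - istar - 1) - δ
      have t1 : ged σ z (evalW σ (v.take (istar+1))) ≤ ged σ z (z * evalW σ (b.take j'))
          + ged σ (z * evalW σ (b.take j')) (evalW σ (v.take (istar+1))) := ged_triangle σ hgen _ _ _
      have t2 : ged σ (z * evalW σ (b.take j')) (evalW σ (v.take (istar+1)))
          = ged σ (evalW σ (v.take (istar+1))) (z * evalW σ (b.take j')) := ged_comm σ hgen hsym _ _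
      have t3 : ged σ z (evalW σ (v.take (istar+1)))
          = ged σ (evalW σ (v.take (istar+1))) z := ged_comm σ hgen hsym _ _
      -- ged p (P (istar+1)) ≤ ged z p - j' + δ
      have t4 : ged σ p (evalW σ (v.take (istar+1))) ≤ ged σ p (z * evalW σ (b.take j'))
          + ged σ (z * evalW σ (b.take j')) (evalW σ (v.take (istar+1))) := ged_triangle σ hgen _ _ _
      have t5 : ged σ p (z * evalW σ (b.take j'))
          = ged σ (z * evalW σ (b.take j')) p := ged_comm σ hgen hsym _ _
      -- ged p (P istar) ≤ ged p (P (istar+1)) + 1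
      have t6 : ged σ p (evalW σ (v.take istar)) ≤ ged σ p (evalW σ (v.take (istar+1)))
          + ged σ (evalW σ (v.take (istar+1))) (evalW σ (v.take istar)) := ged_triangle σ hgen _ _ _
      have t7 : ged σ (evalW σ (v.take (istar+1))) (evalW σ (v.take istar))
          = ged σ (evalW σ (v.take istar)) (evalW σ (v.take (istar+1))) := ged_comm σ hgen hsym _ _
      have t8 := ged_step σ (w := v) istar
      have t9 : ged σ p z = ged σ z p := ged_comm σ hgen hsym _ _
      unfold Tpr
      have e2 : ged σ (evalW σ (v.take (istar+1))) z = (v.length : ℤ) - (istar + 1) := by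
        have := hPv1.2; push_cast at this ⊢; linarith
      linarith [hB.1, hB.2, hbl', h6, hd'', hPv1.1, hL]
  -- key2 : lower bound from the triangle (1, z, y)
  obtain ⟨j₂, hcase2⟩ := T1 istar histar
  have key2 : min (Tpr σ p 1 y) (Tpr σ p y z) - 2 * δ ≤ 2 * ged σ p (evalW σ (v.take istar)) := by
    rcases hcase2 with ⟨hj₂, hd₂⟩ | ⟨hj₂, hd₂⟩
    · -- close to C = z * eval (s₂.take j₂) on side [z, y]
      have hC := side_facts σ hgen gs₂ z hj₂
      rw [hs₂, show z * (z⁻¹ * y) = y by group] at hC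
      have hd₂' : ged σ (evalW σ (v.take istar)) (z * evalW σ (s₂.take j₂)) ≤ (δ : ℤ) := by
        rw [ged_eq_gdist]; rw [hv] at hd₂; exact_mod_cast hd₂
      have t1 : ged σ p z ≤ ged σ p (z * evalW σ (s₂.take j₂))
          + ged σ (z * evalW σ (s₂.take j₂)) z := ged_triangle σ hgen _ _ _
      have t2 : ged σ (z * evalW σ (s₂.take j₂)) z
          = ged σ z (z * evalW σ (s₂.take j₂)) := ged_comm σ hgen hsym _ _
      have t3 : ged σ p y ≤ ged σ p (z * evalW σ (s₂.take j₂))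
          + ged σ (z * evalW σ (s₂.take j₂)) y := ged_triangle σ hgen _ _ _
      have t4 : ged σ p (z * evalW σ (s₂.take j₂)) ≤ ged σ p (evalW σ (v.take istar))
          + ged σ (evalW σ (v.take istar)) (z * evalW σ (s₂.take j₂)) := ged_triangle σ hgen _ _ _
      have t5 : ged σ y z = ged σ z y := ged_comm σ hgen hsym _ _
      have hmin : min (Tpr σ p 1 y) (Tpr σ p y z) ≤ Tpr σ p y z := min_le_right _ _
      unfold Tpr at hmin ⊢
      linarith [hC.1, hC.2, hs₂l', hd₂', hmin]
    · -- close to E = y * eval (s₃.take j₂) on side [y, 1]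
      have hE := side_facts σ hgen gs₃ y hj₂
      rw [hs₃, mul_inv_cancel] at hE
      have hd₂' : ged σ (evalW σ (v.take istar)) (y * evalW σ (s₃.take j₂)) ≤ (δ : ℤ) := by
        rw [ged_eq_gdist]
        rw [hvs₂] at hd₂
        exact_mod_cast hd₂
      have t1 : ged σ p y ≤ ged σ p (y * evalW σ (s₃.take j₂))
          + ged σ (y * evalW σ (s₃.take j₂)) y := ged_triangle σ hgen _ _ _
      have t2 : ged σ (y * evalW σ (s₃.take j₂)) y
          = ged σ y (y * evalW σ (s₃.take j₂)) := ged_comm σ hgen hsym _ _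
      have t3 : ged σ p 1 ≤ ged σ p (y * evalW σ (s₃.take j₂))
          + ged σ (y * evalW σ (s₃.take j₂)) 1 := ged_triangle σ hgen _ _ _
      have t4 : ged σ p (y * evalW σ (s₃.take j₂)) ≤ ged σ p (evalW σ (v.take istar))
          + ged σ (evalW σ (v.take istar)) (y * evalW σ (s₃.take j₂)) := ged_triangle σ hgen _ _ _
      have t5 : ged σ 1 y = ged σ y 1 := ged_comm σ hgen hsym _ _
      have hmin : min (Tpr σ p 1 y) (Tpr σ p y z) ≤ Tpr σ p 1 y := min_le_left _ _
      unfold Tpr at hmin ⊢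
      linarith [hE.1, hE.2, hs₃l', hd₂', hmin]
  linarith [key1, key2]

lemma fourpoint (σ : α → G) (hgen : Generates σ) (hsym : SymmetricGens σ)
    {δ : ℕ} (hhyp : DeltaHyperbolic σ δ) (p x y z : G) :
    min (Tpr σ p x y) (Tpr σ p y z) - (6 * (δ : ℤ) + 2) ≤ Tpr σ p x z := by
  have h := fourpoint_base σ hgen hsym hhyp (x⁻¹ * p) (x⁻¹ * y) (x⁻¹ * z)
  have e1 : Tpr σ (x⁻¹ * p) 1 (x⁻¹ * y) = Tpr σ p x y := by
    rw [show (1 : G) = x⁻¹ * x by group, Tpr_mul_left]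
  have e2 : Tpr σ (x⁻¹ * p) (x⁻¹ * y) (x⁻¹ * z) = Tpr σ p y z := Tpr_mul_left σ _ _ _ _
  have e3 : Tpr σ (x⁻¹ * p) 1 (x⁻¹ * z) = Tpr σ p x z := by
    rw [show (1 : G) = x⁻¹ * x by group, Tpr_mul_left]
  rw [e1, e2, e3] at h
  exact h

end FourPoint

section LongWord

variable {α : Type*} {G : Type*} [Group G]

lemma exists_long_geodesic (σ : α → G) [Infinite G] [Fintype α]
    (hgen : Generates σ) (N : ℕ) :
    ∃ w : List α, IsGeodesicWord σ w ∧ w.length = N := by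
  have hub : ∃ g : G, N ≤ wlen σ g := by
    by_contra h
    push_neg at h
    have hfin : {w : List α | w.length ≤ N}.Finite := List.finite_length_le α N
    have huniv : (Set.univ : Set G) ⊆ evalW σ '' {w : List α | w.length ≤ N} := by
      intro g _
      obtain ⟨w, hw, hwl⟩ := exists_min_word σ (hgen g)
      exact ⟨w, by rw [Set.mem_setOf_eq, hwl]; exact le_of_lt (h g), hw⟩
    exact Set.infinite_univ ((hfin.image (evalW σ)).subset huniv)
  obtain ⟨g, hg⟩ := hub
  obtain ⟨w, hw, hwl⟩ := exists_min_word σ (hgen g)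
  have hNw : N ≤ w.length := by omega
  refine ⟨w.take N, ?_, by simp [List.length_take, Nat.min_eq_left hNw]⟩
  have gw : IsGeodesicWord σ w := by rw [IsGeodesicWord, hw, hwl]
  rw [IsGeodesicWord, (geodesic_take σ hgen gw hNw).1]
  simp [List.length_take, Nat.min_eq_left hNw]

end LongWord

/-- Every infinite hyperbolic group contains an element of infinite order. -/
theorem infinite_hyperbolic_has_infinite_order_element {α : Type*} {G : Type*}
    [Group G] [Infinite G] [Fintype α] (σ : α → G) (δ : ℕ)
    (hgen : Generates σ) (hsym : SymmetricGens σ) (hhyp : DeltaHyperbolic σ δ) :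
    ∃ g : G, ¬ IsOfFinOrder g := by
  classical
  set E : ℕ := 6 * δ + 2 with hE
  set lam : ℕ := 3 * δ + 2 with hlam
  set Lam : ℕ := 2 * E + 1 with hLam
  set P : ℕ := Fintype.card (Fin lam → α) with hP
  set N : ℕ := P * Lam + lam with hN
  have hEZ : (E : ℤ) = 6 * (δ : ℤ) + 2 := by rw [hE]; push_cast; ring
  have hlamZ : (lam : ℤ) = 3 * (δ : ℤ) + 2 := by rw [hlam]; push_cast; ring
  obtain ⟨W, gW, hWN⟩ := exists_long_geodesic σ hgen N
  have hidx : ∀ (j : Fin (P+1)) (k : Fin lam), (j : ℕ) * Lam + (k : ℕ) < W.length := by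
    intro j k
    have h1 : (j : ℕ) ≤ P := Nat.lt_succ_iff.mp j.2
    have h2 : (j : ℕ) * Lam ≤ P * Lam := Nat.mul_le_mul_right _ h1
    have h3 : (k : ℕ) < lam := k.2
    omega
  set win : Fin (P+1) → (Fin lam → α) :=
    fun j k => W[(j : ℕ) * Lam + (k : ℕ)]'(hidx j k) with hwin
  have hcard : P < Fintype.card (Fin (P+1)) := by rw [Fintype.card_fin]; omega
  obtain ⟨ja, jb, hne, heqab⟩ := Fintype.exists_ne_map_eq_of_card_lt win hcard
  obtain ⟨j1, j2, hlt, heq2⟩ : ∃ j1 j2 : Fin (P+1), j1 < j2 ∧ win j1 = win j2 := by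
    rcases lt_or_gt_of_ne hne with h | h
    · exact ⟨ja, jb, h, heqab⟩
    · exact ⟨jb, ja, h, heqab.symm⟩
  set n : ℕ := (j1 : ℕ) * Lam with hn
  set m : ℕ := (j2 : ℕ) * Lam with hm
  have hj2P : (j2 : ℕ) ≤ P := Nat.lt_succ_iff.mp j2.2
  have hnm : n + Lam ≤ m := by
    have h1 : (j1 : ℕ) + 1 ≤ (j2 : ℕ) := hlt
    have h2 := Nat.mul_le_mul_right Lam h1
    rw [add_mul, one_mul] at h2
    omega
  have hmN : m + lam ≤ N := by
    have := Nat.mul_le_mul_right Lam hj2P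
    omega
  set d : ℕ := m - n with hd
  have hdLam : Lam ≤ d := by omega
  have hlamd : lam ≤ d := by omega
  have hdZ : (2 * (E : ℤ) + 1) ≤ (d : ℤ) := by
    have : Lam ≤ d := hdLam
    have h1 : (Lam : ℤ) ≤ (d : ℤ) := by exact_mod_cast this
    have h2 : (Lam : ℤ) = 2 * (E : ℤ) + 1 := by rw [hLam]; push_cast; ring
    omega
  -- the two windows carry the same letters
  have hwineq : (W.drop n).take lam = (W.drop m).take lam := by
    apply List.ext_getElem
    · simp only [List.length_take, List.length_drop, hWN]; omega
    · intro k h1 h2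
      have hk : k < lam := by
        simp only [List.length_take, List.length_drop, hWN] at h1; omega
      simp only [List.getElem_take, List.getElem_drop]
      have := congrFun heq2 ⟨k, hk⟩
      simpa [hwin, hn, hm] using this
  -- segments of the long geodesic
  set Sg : ℕ → ℕ → G := fun a b => evalW σ ((W.drop a).take (b - a)) with hSg
  have hseg_mul : ∀ a b c : ℕ, a ≤ b → b ≤ c → Sg a b * Sg b c = Sg a c := by
    intro a b c hab hbc
    show evalW σ _ * evalW σ _ = evalW σ _
    rw [← evalW_append]
    congr 1
    have h1 : c - a = (b - a) + (c - b) := by omega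
    rw [h1, List.take_add, List.drop_drop, show a + (b - a) = b by omega]
  have hseg_wlen : ∀ a b : ℕ, a ≤ b → b ≤ N → wlen σ (Sg a b) = b - a := by
    intro a b hab hbN
    have hub : wlen σ (Sg a b) ≤ b - a := by
      have h := wlen_le_length σ ((W.drop a).take (b - a))
      have hl : ((W.drop a).take (b - a)).length ≤ b - a := by
        simp only [List.length_take, List.length_drop]
        exact min_le_left _ _
      exact le_trans h hl
    have h1 : evalW σ (W.take a) * Sg a b = evalW σ (W.take b) := by
      have ht := List.take_add (l := W) (i := a) (j := b - a)
      rw [show a + (b - a) = b by omega] at ht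
      show _ * evalW σ _ = _
      rw [ht, evalW_append]
    have h2 : evalW σ W = evalW σ (W.take a) * Sg a b * evalW σ (W.drop b) := by
      rw [h1, evalW_take_mul_drop]
    have h3 : N ≤ wlen σ (evalW σ (W.take a)) + wlen σ (Sg a b)
        + wlen σ (evalW σ (W.drop b)) := by
      have hN0 : wlen σ (evalW σ W) = N := by rw [gW, hWN]
      calc N = wlen σ (evalW σ W) := hN0.symm
        _ ≤ wlen σ (evalW σ (W.take a) * Sg a b) + wlen σ (evalW σ (W.drop b)) := by
            rw [h2]; exact wlen_mul_le σ hgen _ _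
        _ ≤ wlen σ (evalW σ (W.take a)) + wlen σ (Sg a b) + wlen σ (evalW σ (W.drop b)) := by
            have := wlen_mul_le σ hgen (evalW σ (W.take a)) (Sg a b)
            omega
    have h4 : wlen σ (evalW σ (W.take a)) ≤ a := by
      have h := wlen_le_length σ (W.take a)
      have : (W.take a).length ≤ a := by
        simp only [List.length_take]; exact min_le_left _ _
      omega
    have h5 : wlen σ (evalW σ (W.drop b)) ≤ N - b := by
      have h := wlen_le_length σ (W.drop b)
      simp only [List.length_drop, hWN] at h
      omega
    omega
  set s : G := Sg n m with hs
  set glam : G := Sg n (n + lam) with hglam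
  have hmatch : glam = Sg m (m + lam) := by
    show evalW σ _ = evalW σ _
    congr 1
    rw [show n + lam - n = lam by omega, show m + lam - m = lam by omega, hwineq]
  have hs_wlen : wlen σ s = d := by
    rw [hs, hseg_wlen n m (by omega) (by omega)]
  have hglam_wlen : wlen σ glam = lam := by
    rw [hglam, hseg_wlen n (n + lam) (by omega) (by omega)]; omega
  have hsg : wlen σ (s * glam) = d + lam := by
    have h1 : s * Sg m (m + lam) = Sg n (m + lam) := hseg_mul n m (m + lam) (by omega) (by omega)
    rw [hmatch, h1, hseg_wlen n (m + lam) (by omega) (by omega)]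
    omega
  have hginvs : wlen σ (glam⁻¹ * s) = d - lam := by
    have h1 : glam * Sg (n + lam) m = s := hseg_mul n (n + lam) m (by omega) (by omega)
    have h2 : glam⁻¹ * s = Sg (n + lam) m := by rw [← h1]; group
    rw [h2, hseg_wlen (n + lam) m (by omega) (by omega)]
    omega
  -- step 2 : the square of s is long
  have hs2 : 2 * (d : ℤ) - (E : ℤ) ≤ (wlen σ (s * s) : ℤ) := by
    have h4 := fourpoint σ hgen hsym hhyp 1 s⁻¹ s glam
    have e1 : Tpr σ 1 s⁻¹ glam = 0 := by
      simp only [Tpr, ged, one_mul, inv_one, inv_inv]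
      rw [wlen_inv σ hgen hsym, hs_wlen, hglam_wlen, hsg]
      push_cast; ring
    have e2 : Tpr σ 1 s glam = 2 * (lam : ℤ) := by
      simp only [Tpr, ged, one_mul, inv_one]
      rw [show s⁻¹ * glam = (glam⁻¹ * s)⁻¹ by group, wlen_inv σ hgen hsym,
        hginvs, hs_wlen, hglam_wlen]
      push_cast [Nat.cast_sub hlamd]
      ring
    have e3 : Tpr σ 1 s⁻¹ s = 2 * (d : ℤ) - (wlen σ (s * s) : ℤ) := by
      simp only [Tpr, ged, one_mul, inv_one, inv_inv]
      rw [wlen_inv σ hgen hsym, hs_wlen]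
      push_cast; ring
    rw [e1, e2, e3] at h4
    have hmin : min (2 * (d : ℤ) - (wlen σ (s * s) : ℤ)) (2 * (lam : ℤ)) ≤ (E : ℤ) := by
      rw [hEZ]; linarith
    rcases min_le_iff.mp hmin with h | h
    · linarith
    · exfalso; rw [hlamZ] at h; rw [hEZ] at *; linarith
  -- chain of powers
  have hged_pow : ∀ a k : ℕ, ged σ (s ^ a) (s ^ (a + k)) = (wlen σ (s ^ k) : ℤ) := by
    intro a k; unfold ged; rw [pow_add, inv_mul_cancel_left]
  have hD : ∀ j : ℕ, (wlen σ (s ^ j) : ℤ) + (d : ℤ) - 2 * (E : ℤ)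
      ≤ (wlen σ (s ^ (j + 1)) : ℤ) := by
    intro j
    induction j with
    | zero =>
      rw [pow_zero, pow_one, wlen_one, hs_wlen]
      have : (0 : ℤ) ≤ (E : ℤ) := Int.natCast_nonneg _
      push_cast
      linarith
    | succ j ih =>
      have h4 := fourpoint σ hgen hsym hhyp (s ^ (j + 1)) (s ^ j) 1 (s ^ (j + 2))
      have g1 : ged σ (s ^ (j + 1)) (s ^ j) = (d : ℤ) := by
        rw [ged_comm σ hgen hsym]
        have := hged_pow j 1
        rw [pow_one, hs_wlen] at this
        exact this
      have g2 : ged σ (s ^ (j + 1)) 1 = (wlen σ (s ^ (j + 1)) : ℤ) := by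
        rw [ged_comm σ hgen hsym, ged_one_left]
      have g3 : ged σ (s ^ j) 1 = (wlen σ (s ^ j) : ℤ) := by
        rw [ged_comm σ hgen hsym, ged_one_left]
      have g4 : ged σ (s ^ (j + 1)) (s ^ (j + 2)) = (d : ℤ) := by
        have := hged_pow (j + 1) 1
        rw [pow_one, hs_wlen] at this
        exact this
      have g5 : ged σ (s ^ j) (s ^ (j + 2)) = (wlen σ (s * s) : ℤ) := by
        have := hged_pow j 2
        rw [show s ^ 2 = s * s from sq s] at this
        exact this
      have g6 : ged σ 1 (s ^ (j + 2)) = (wlen σ (s ^ (j + 2)) : ℤ) := ged_one_left σ _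
      have eA : Tpr σ (s ^ (j + 1)) (s ^ j) 1
          = (d : ℤ) + (wlen σ (s ^ (j + 1)) : ℤ) - (wlen σ (s ^ j) : ℤ) := by
        unfold Tpr; rw [g1, g2, g3]
      have eB : Tpr σ (s ^ (j + 1)) 1 (s ^ (j + 2))
          = (wlen σ (s ^ (j + 1)) : ℤ) + (d : ℤ) - (wlen σ (s ^ (j + 2)) : ℤ) := by
        unfold Tpr; rw [g2, g4, g6]
      have eC : Tpr σ (s ^ (j + 1)) (s ^ j) (s ^ (j + 2))
          = 2 * (d : ℤ) - (wlen σ (s * s) : ℤ) := by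
        unfold Tpr; rw [g1, g4, g5]; ring
      rw [eA, eB, eC] at h4
      have hmin : min ((d : ℤ) + (wlen σ (s ^ (j + 1)) : ℤ) - (wlen σ (s ^ j) : ℤ))
          ((wlen σ (s ^ (j + 1)) : ℤ) + (d : ℤ) - (wlen σ (s ^ (j + 2)) : ℤ))
          ≤ 2 * (E : ℤ) := by
        rw [hEZ] at *; linarith
      rcases min_le_iff.mp hmin with h | h
      · exfalso; linarith
      · linarith
  have hgrow : ∀ j : ℕ, (j : ℤ) ≤ (wlen σ (s ^ j) : ℤ) := by
    intro j
    induction j with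
    | zero => simp [pow_zero, wlen_one]
    | succ j ih =>
      have := hD j
      push_cast
      linarith
  refine ⟨s, ?_⟩
  rw [isOfFinOrder_iff_pow_eq_one]
  rintro ⟨k, hk, hks⟩
  have h := hgrow k
  rw [hks, wlen_one] at h
  simp only [Nat.cast_zero] at h
  omega
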